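/- arXiv:0906.3445 — 4 statements merged into one kernel-verified Lean document; each statement's English description precedes it below -/
import Mathlib

section
/- If an alternating sign matrix of even size n is invariant under rotation by a quarter turn, then n is divisible by 4. In particular, for every integer N ≥ 0 there exists no quarter-turn symmetric ASM of size 4N+2. -/
/-- An alternating sign matrix of size `n`: entries in `{-1,0,1}`, and in every
row and column the nonzero entries alternate in sign and sum to `1`
(equivalently, all partial sums along rows and columns lie in `{0,1}` and
each full row and column sums to `1`). -/
def IsASM (n : ℕ) (M : Matrix (Fin n) (Fin n) ℤ) : Prop :=
  (∀ i j : Fin n, M i j = -1 ∨ M i j = 0 ∨ M i j = 1) ∧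
  (∀ i j : Fin n, (∑ k ∈ Finset.Iic j, M i k) = 0 ∨ (∑ k ∈ Finset.Iic j, M i k) = 1) ∧
  (∀ i j : Fin n, (∑ k ∈ Finset.Iic i, M k j) = 0 ∨ (∑ k ∈ Finset.Iic i, M k j) = 1) ∧
  (∀ i : Fin n, (∑ j, M i j) = 1) ∧
  (∀ j : Fin n, (∑ i, M i j) = 1)

/-- `A(n)`: the number of ASMs of size `n`. -/
noncomputable def numASM (n : ℕ) : ℕ :=
  Nat.card {M : Matrix (Fin n) (Fin n) ℤ // IsASM n M}

/-- Half-turn symmetry: `M_{i,j} = M_{n+1-i,n+1-j}`. -/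
def IsHT (n : ℕ) (M : Matrix (Fin n) (Fin n) ℤ) : Prop :=
  ∀ i j : Fin n, M i j = M i.rev j.rev

/-- `A_HT(n)`: the number of half-turn symmetric ASMs of size `n`. -/
noncomputable def numHTASM (n : ℕ) : ℕ :=
  Nat.card {M : Matrix (Fin n) (Fin n) ℤ // IsASM n M ∧ IsHT n M}

/-- Quarter-turn symmetry: `M_{i,j} = M_{j,n+1-i}`. -/
def IsQT (n : ℕ) (M : Matrix (Fin n) (Fin n) ℤ) : Prop :=
  ∀ i j : Fin n, M i j = M j i.rev

/-- `A_QT(n)`: the number of quarter-turn symmetric ASMs of size `n`. -/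
noncomputable def numQTASM (n : ℕ) : ℕ :=
  Nat.card {M : Matrix (Fin n) (Fin n) ℤ // IsASM n M ∧ IsQT n M}


lemma rev_natAdd_eq {m : ℕ} (j : Fin m) :
    (Fin.natAdd m j).rev = Fin.castAdd m j.rev := by
  apply Fin.ext
  simp [Fin.val_rev]
  omega

lemma key {n : ℕ} (M : Matrix (Fin n) (Fin n) ℤ)
    (hn : Even n)
    (hA : (∀ i : Fin n, (∑ j, M i j) = 1))
    (hQ : ∀ i j : Fin n, M i j = M j i.rev) : 4 ∣ n := by
  obtain ⟨m, rfl⟩ := hn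
  set A : ℤ := ∑ i : Fin m, ∑ j : Fin m, M (Fin.castAdd m i) (Fin.castAdd m j) with hA'
  have hrow : (m : ℤ) = ∑ i : Fin m, (∑ j, M (Fin.castAdd m i) j) := by
    simp [hA]
  have hsplit : ∀ i : Fin m, (∑ j, M (Fin.castAdd m i) j)
      = (∑ j : Fin m, M (Fin.castAdd m i) (Fin.castAdd m j))
        + ∑ j : Fin m, M (Fin.castAdd m i) (Fin.natAdd m j) := fun i =>
    Fin.sum_univ_add _
  have hB : (∑ i : Fin m, ∑ j : Fin m, M (Fin.castAdd m i) (Fin.natAdd m j)) = A := by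
    have h1 : ∀ (i j : Fin m),
        M (Fin.castAdd m i) (Fin.natAdd m j)
          = M (Fin.castAdd m j.rev) (Fin.castAdd m i) := by
      intro i j
      have h := hQ (Fin.natAdd m j).rev (Fin.castAdd m i)
      rw [Fin.rev_rev] at h
      rw [rev_natAdd_eq] at h
      exact h.symm
    calc (∑ i : Fin m, ∑ j : Fin m, M (Fin.castAdd m i) (Fin.natAdd m j))
        = ∑ i : Fin m, ∑ j : Fin m, M (Fin.castAdd m j.rev) (Fin.castAdd m i) := by
          simp_rw [h1]
      _ = ∑ p : Fin m × Fin m, M (Fin.castAdd m p.2.rev) (Fin.castAdd m p.1) := by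
          exact (Fintype.sum_prod_type (fun p : Fin m × Fin m => M (Fin.castAdd m p.2.rev) (Fin.castAdd m p.1))).symm
      _ = ∑ p : Fin m × Fin m, M (Fin.castAdd m p.1) (Fin.castAdd m p.2) := by
          apply Fintype.sum_equiv ⟨fun p => (p.2.rev, p.1), fun p => (p.2, p.1.rev),
            fun p => by simp, fun p => by simp⟩
          intro p; rfl
      _ = A := by rw [hA']; exact Fintype.sum_prod_type (fun p : Fin m × Fin m => M (Fin.castAdd m p.1) (Fin.castAdd m p.2))
  have hm : (m : ℤ) = 2 * A := by
    rw [hrow]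
    simp_rw [hsplit]
    rw [Finset.sum_add_distrib, hB, ← hA']
    ring
  have : ((m + m : ℕ) : ℤ) = 4 * A := by push_cast; omega
  have h4 : (4 : ℤ) ∣ ((m + m : ℕ) : ℤ) := ⟨A, this⟩
  exact_mod_cast h4

/-- If an ASM of even size `n` is quarter-turn symmetric, then `4 ∣ n`;
in particular there is no quarter-turn symmetric ASM of size `4N+2`. -/
theorem no_QTASM_of_size_4N_add_two :
    (∀ (n : ℕ) (M : Matrix (Fin n) (Fin n) ℤ), Even n → IsASM n M → IsQT n M → 4 ∣ n) ∧
    (∀ N : ℕ, ¬ ∃ M : Matrix (Fin (4*N+2)) (Fin (4*N+2)) ℤ,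
      IsASM (4*N+2) M ∧ IsQT (4*N+2) M) := by
  constructor
  · intro n M hn hA hQ
    exact key M hn hA.2.2.2.1 hQ
  · rintro N ⟨M, hA, hQ⟩
    have : (4 : ℕ) ∣ 4*N+2 := key M ⟨2*N+1, by ring⟩ hA.2.2.2.1 hQ
    omega
end

section
/- For every integer N ≥ 1, every nonzero complex number a and all nonzero complex numbers x₂,…,x_{2N}, the specialization x₁ = a⁻¹·x_{N+1} of the partition function satisfies Z(N; a⁻¹x_{N+1}, x₂,…,x_{2N}) = [Π_{2≤k≤N} σ(a·x_{N+1}/x_k)]·[Π_{N+1≤k≤2N} σ(a²·x_k/x_{N+1})]·Z(N−1; x₂,…,x_N, x_{N+2},…,x_{2N}), where Z(0) = 1. -/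
noncomputable section

/-- `σ(x) = x - x⁻¹`. -/
def sig (x : ℂ) : ℂ := x - x⁻¹

/-- The type of possible ASM entries: `{-1, 0, 1} ⊆ ℤ`. -/
abbrev ASMEntry : Type := ({-1, 0, 1} : Finset ℤ)

/-- An alternating sign matrix of size `N` (with entries recorded in `{-1,0,1}`):
in every row and column the nonzero entries alternate in sign and sum to `1`
(equivalently, all partial sums along rows and columns lie in `{0,1}` and each
full row and column sums to `1`). -/
def IsASMFun (N : ℕ) (M : Fin N → Fin N → ASMEntry) : Prop :=
  (∀ i j : Fin N, (∑ k ∈ Finset.Iic j, (M i k : ℤ)) = 0 ∨ (∑ k ∈ Finset.Iic j, (M i k : ℤ)) = 1) ∧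
  (∀ i j : Fin N, (∑ k ∈ Finset.Iic i, (M k j : ℤ)) = 0 ∨ (∑ k ∈ Finset.Iic i, (M k j : ℤ)) = 1) ∧
  (∀ i : Fin N, (∑ j, (M i j : ℤ)) = 1) ∧
  (∀ j : Fin N, (∑ i, (M i j : ℤ)) = 1)

instance (N : ℕ) : DecidablePred (IsASMFun N) := fun M => by
  unfold IsASMFun; infer_instance

/-- The (finite) type of ASMs of size `N`. -/
def ASMt (N : ℕ) : Type := {M : Fin N → Fin N → ASMEntry // IsASMFun N M}

instance (N : ℕ) : Fintype (ASMt N) := Subtype.fintype _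

/-- The index (in `Fin (2N)`) of the variable `xᵢ` attached to row `i`. -/
def rowIdx {N : ℕ} (i : Fin N) : Fin (2*N) := ⟨i.1, by have := i.isLt; omega⟩

/-- The index (in `Fin (2N)`) of the variable `x_{N+j}` attached to column `j`. -/
def colIdx {N : ℕ} (j : Fin N) : Fin (2*N) := ⟨N + j.1, by have := j.isLt; omega⟩

/-- The weight of position `(i,j)` of the ASM `M`, for the square-ice model with
parameter `a` and spectral parameters `X`: `σ(a²)` at nonzero entries; at a zero
entry it is `σ(a·x_{N+j}/xᵢ)` if the row and column partial sums differ there,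
and `σ(a·xᵢ/x_{N+j})` if they agree. -/
def weight (a : ℂ) {N : ℕ} (X : Fin (2*N) → ℂ) (M : Fin N → Fin N → ASMEntry)
    (i j : Fin N) : ℂ :=
  if (M i j : ℤ) ≠ 0 then sig (a ^ 2)
  else if (∑ k ∈ Finset.Iic j, (M i k : ℤ)) ≠ (∑ k ∈ Finset.Iic i, (M k j : ℤ)) then
    sig (a * X (colIdx j) / X (rowIdx i))
  else
    sig (a * X (rowIdx i) / X (colIdx j))

/-- The square-ice partition function with domain-wall boundary:
`Z(N; x₁, …, x_{2N}) = Σ_M Π_{i,j} weight(i,j)`, summed over all ASMs of size `N`. -/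
def Z (a : ℂ) (N : ℕ) (X : Fin (2*N) → ℂ) : ℂ :=
  ∑ M : ASMt N, ∏ i : Fin N, ∏ j : Fin N, weight a X M.1 i j

namespace ASMaux

def e0 : ASMEntry := ⟨0, by decide⟩
def e1 : ASMEntry := ⟨1, by decide⟩

@[simp] lemma e0_val : (e0 : ℤ) = 0 := rfl
@[simp] lemma e1_val : (e1 : ℤ) = 1 := rfl

lemma entry_cases (x : ASMEntry) : (x : ℤ) = -1 ∨ (x : ℤ) = 0 ∨ (x : ℤ) = 1 := by
  have h := x.2
  simp only [Finset.mem_insert, Finset.mem_singleton] at h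
  exact h

lemma Iic_zero_sum {n : ℕ} (f : Fin (n+1) → ℤ) :
    ∑ k ∈ Finset.Iic (0 : Fin (n+1)), f k = f 0 := by
  have : Finset.Iic (0 : Fin (n+1)) = {0} := by
    ext k; simp [Fin.le_zero_iff]
  rw [this, Finset.sum_singleton]

lemma Iic_succ_eq {n : ℕ} (j : Fin n) :
    Finset.Iic j.succ =
      insert (0 : Fin (n+1)) ((Finset.Iic j).map ⟨Fin.succ, Fin.succ_injective n⟩) := by
  ext k
  simp only [Finset.mem_Iic, Finset.mem_insert, Finset.mem_map, Function.Embedding.coeFn_mk]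
  constructor
  · intro h
    rcases Fin.eq_zero_or_eq_succ k with h0 | ⟨k', rfl⟩
    · exact Or.inl h0
    · exact Or.inr ⟨k', by simpa [Fin.succ_le_succ_iff] using h, rfl⟩
  · rintro (rfl | ⟨k', hk', rfl⟩)
    · exact Fin.zero_le _
    · simpa [Fin.succ_le_succ_iff] using hk'

lemma Iic_succ_sum {n : ℕ} (f : Fin (n+1) → ℤ) (j : Fin n) :
    ∑ k ∈ Finset.Iic j.succ, f k = f 0 + ∑ k ∈ Finset.Iic j, f k.succ := by
  rw [Iic_succ_eq, Finset.sum_insert (by simp [Fin.succ_ne_zero]), Finset.sum_map]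
  rfl

/-- Extend an `n×n` matrix to `(n+1)×(n+1)` with a `1` at the corner. -/
def embM {n : ℕ} (M : Fin n → Fin n → ASMEntry) (i j : Fin (n+1)) : ASMEntry :=
  Fin.cases (Fin.cases e1 (fun _ => e0) j) (fun i' => Fin.cases e0 (fun j' => M i' j') j) i

@[simp] lemma embM_00 {n : ℕ} (M : Fin n → Fin n → ASMEntry) : embM M 0 0 = e1 := rfl
@[simp] lemma embM_0succ {n : ℕ} (M : Fin n → Fin n → ASMEntry) (j : Fin n) :
    embM M 0 j.succ = e0 := by simp [embM]
@[simp] lemma embM_succ0 {n : ℕ} (M : Fin n → Fin n → ASMEntry) (i : Fin n) :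
    embM M i.succ 0 = e0 := by simp [embM]
@[simp] lemma embM_succsucc {n : ℕ} (M : Fin n → Fin n → ASMEntry) (i j : Fin n) :
    embM M i.succ j.succ = M i j := by simp [embM]

def resM {n : ℕ} (M : Fin (n+1) → Fin (n+1) → ASMEntry) (i j : Fin n) : ASMEntry :=
  M i.succ j.succ


section Struct
variable {n : ℕ}

lemma row0_zero {M' : Fin (n+1) → Fin (n+1) → ASMEntry} (h : IsASMFun (n+1) M')
    (h00 : (M' 0 0 : ℤ) = 1) (j : Fin n) : (M' 0 j.succ : ℤ) = 0 := by
  obtain ⟨hr, hc, hrt, hct⟩ := h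
  have hnn : ∀ j' : Fin (n+1), (0:ℤ) ≤ (M' 0 j' : ℤ) := by
    intro j'
    have := hc 0 j'
    rw [Iic_zero_sum] at this
    omega
  have htot : (M' 0 0 : ℤ) + ∑ j' : Fin n, (M' 0 j'.succ : ℤ) = 1 := by
    rw [show ((M' 0 0 : ℤ) + ∑ j' : Fin n, (M' 0 j'.succ : ℤ)) = ∑ j' : Fin (n+1), (M' 0 j' : ℤ) from (Fin.sum_univ_succ (fun j' => (M' 0 j' : ℤ))).symm]; exact hrt 0
  have hs : ∑ j' : Fin n, (M' 0 j'.succ : ℤ) = 0 := by omega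
  have := (Finset.sum_eq_zero_iff_of_nonneg (fun j' _ => hnn j'.succ)).mp hs j
    (Finset.mem_univ j)
  exact this

lemma col0_zero {M' : Fin (n+1) → Fin (n+1) → ASMEntry} (h : IsASMFun (n+1) M')
    (h00 : (M' 0 0 : ℤ) = 1) (i : Fin n) : (M' i.succ 0 : ℤ) = 0 := by
  obtain ⟨hr, hc, hrt, hct⟩ := h
  have hnn : ∀ i' : Fin (n+1), (0:ℤ) ≤ (M' i' 0 : ℤ) := by
    intro i'
    have := hr i' 0
    rw [Iic_zero_sum] at this
    omega
  have htot : (M' 0 0 : ℤ) + ∑ i' : Fin n, (M' i'.succ 0 : ℤ) = 1 := by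
    rw [show ((M' 0 0 : ℤ) + ∑ i' : Fin n, (M' i'.succ 0 : ℤ)) = ∑ i' : Fin (n+1), (M' i' 0 : ℤ) from (Fin.sum_univ_succ (fun i' => (M' i' 0 : ℤ))).symm]; exact hct 0
  have hs : ∑ i' : Fin n, (M' i'.succ 0 : ℤ) = 0 := by omega
  exact (Finset.sum_eq_zero_iff_of_nonneg (fun i' _ => hnn i'.succ)).mp hs i
    (Finset.mem_univ i)

lemma emb_row_psum (M : Fin n → Fin n → ASMEntry) (i j : Fin n) :
    ∑ k ∈ Finset.Iic j.succ, (embM M i.succ k : ℤ) = ∑ k ∈ Finset.Iic j, (M i k : ℤ) := by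
  rw [Iic_succ_sum]; simp

lemma emb_col_psum (M : Fin n → Fin n → ASMEntry) (i j : Fin n) :
    ∑ k ∈ Finset.Iic i.succ, (embM M k j.succ : ℤ) = ∑ k ∈ Finset.Iic i, (M k j : ℤ) := by
  rw [Iic_succ_sum]; simp

lemma emb_row0_psum (M : Fin n → Fin n → ASMEntry) (j : Fin (n+1)) :
    ∑ k ∈ Finset.Iic j, (embM M 0 k : ℤ) = 1 := by
  induction j using Fin.cases with
  | zero => rw [Iic_zero_sum]; simp
  | succ j' => rw [Iic_succ_sum]; simp

lemma emb_col0_psum (M : Fin n → Fin n → ASMEntry) (i : Fin (n+1)) :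
    ∑ k ∈ Finset.Iic i, (embM M k 0 : ℤ) = 1 := by
  induction i using Fin.cases with
  | zero => rw [Iic_zero_sum]; simp
  | succ i' => rw [Iic_succ_sum]; simp

lemma emb_rowsucc_psum0 (M : Fin n → Fin n → ASMEntry) (i : Fin n) :
    ∑ k ∈ Finset.Iic (0 : Fin (n+1)), (embM M i.succ k : ℤ) = 0 := by
  rw [Iic_zero_sum]; simp

lemma emb_colsucc_psum0 (M : Fin n → Fin n → ASMEntry) (j : Fin n) :
    ∑ k ∈ Finset.Iic (0 : Fin (n+1)), (embM M k j.succ : ℤ) = 0 := by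
  rw [Iic_zero_sum]; simp

lemma embM_isASM {M : Fin n → Fin n → ASMEntry} (h : IsASMFun n M) :
    IsASMFun (n+1) (embM M) := by
  obtain ⟨hr, hc, hrt, hct⟩ := h
  refine ⟨?_, ?_, ?_, ?_⟩
  · intro i j
    induction i using Fin.cases with
    | zero => right; exact emb_row0_psum M j
    | succ i' =>
      induction j using Fin.cases with
      | zero => left; exact emb_rowsucc_psum0 M i'
      | succ j' => rw [emb_row_psum]; exact hr i' j'
  · intro i j
    induction j using Fin.cases with
    | zero => right; exact emb_col0_psum M i
    | succ j' =>
      induction i using Fin.cases with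
      | zero => left; exact emb_colsucc_psum0 M j'
      | succ i' => rw [emb_col_psum]; exact hc i' j'
  · intro i
    induction i using Fin.cases with
    | zero => rw [Fin.sum_univ_succ]; simp
    | succ i' => rw [Fin.sum_univ_succ]; simpa using hrt i'
  · intro j
    induction j using Fin.cases with
    | zero => rw [Fin.sum_univ_succ]; simp
    | succ j' => rw [Fin.sum_univ_succ]; simpa using hct j'

lemma res_row_psum {M' : Fin (n+1) → Fin (n+1) → ASMEntry} (h : IsASMFun (n+1) M')
    (h00 : (M' 0 0 : ℤ) = 1) (i j : Fin n) :
    ∑ k ∈ Finset.Iic j, (resM M' i k : ℤ) = ∑ k ∈ Finset.Iic j.succ, (M' i.succ k : ℤ) := by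
  rw [Iic_succ_sum, col0_zero h h00 i, zero_add]; rfl

lemma res_col_psum {M' : Fin (n+1) → Fin (n+1) → ASMEntry} (h : IsASMFun (n+1) M')
    (h00 : (M' 0 0 : ℤ) = 1) (i j : Fin n) :
    ∑ k ∈ Finset.Iic i, (resM M' k j : ℤ) = ∑ k ∈ Finset.Iic i.succ, (M' k j.succ : ℤ) := by
  rw [Iic_succ_sum, row0_zero h h00 j, zero_add]; rfl

lemma resM_isASM {M' : Fin (n+1) → Fin (n+1) → ASMEntry} (h : IsASMFun (n+1) M')
    (h00 : (M' 0 0 : ℤ) = 1) : IsASMFun n (resM M') := by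
  refine ⟨?_, ?_, ?_, ?_⟩
  · intro i j; rw [res_row_psum h h00]; exact h.1 i.succ j.succ
  · intro i j; rw [res_col_psum h h00]; exact h.2.1 i.succ j.succ
  · intro i
    have := h.2.2.1 i.succ
    rw [Fin.sum_univ_succ, col0_zero h h00 i, zero_add] at this
    exact this
  · intro j
    have := h.2.2.2 j.succ
    rw [Fin.sum_univ_succ, row0_zero h h00 j, zero_add] at this
    exact this

lemma res_emb (M : Fin n → Fin n → ASMEntry) : resM (embM M) = M := by
  funext i j; simp [resM]

lemma emb_res {M' : Fin (n+1) → Fin (n+1) → ASMEntry} (h : IsASMFun (n+1) M')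
    (h00 : (M' 0 0 : ℤ) = 1) : embM (resM M') = M' := by
  funext i j
  induction i using Fin.cases with
  | zero =>
    induction j using Fin.cases with
    | zero => simp only [embM_00]; exact Subtype.ext h00.symm
    | succ j' => simp only [embM_0succ]; exact Subtype.ext (row0_zero h h00 j').symm
  | succ i' =>
    induction j using Fin.cases with
    | zero => simp only [embM_succ0]; exact Subtype.ext (col0_zero h h00 i').symm
    | succ j' => simp [resM]

end Struct


section Weights
variable {n : ℕ} (a : ℂ) (X : Fin (2*(n+1)) → ℂ)

lemma sig_one : sig 1 = 0 := by simp [sig]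

lemma weight_00_of_ne (ha : a ≠ 0) {M' : Fin (n+1) → Fin (n+1) → ASMEntry} (h : IsASMFun (n+1) M')
    (h00 : (M' 0 0 : ℤ) ≠ 1)
    (hspec : X ⟨0, by omega⟩ = a⁻¹ * X ⟨n+1, by omega⟩) (hXN : X ⟨n+1, by omega⟩ ≠ 0) :
    weight a X M' 0 0 = 0 := by
  have h0 : (M' 0 0 : ℤ) = 0 := by
    have := h.1 0 0
    rw [Iic_zero_sum] at this
    omega
  rw [weight, if_neg (by simpa using h0), if_neg]
  · have hrow : (rowIdx (0 : Fin (n+1)) : Fin (2*(n+1))) = ⟨0, by omega⟩ := rfl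
    have hcol : (colIdx (0 : Fin (n+1)) : Fin (2*(n+1))) = ⟨n+1, by omega⟩ := by
      simp [colIdx]
    rw [hrow, hcol, hspec]
    have : a * (a⁻¹ * X ⟨n+1, by omega⟩) / X ⟨n+1, by omega⟩ = 1 := by
      field_simp
    rw [this, sig_one]
  · rw [Iic_zero_sum, Iic_zero_sum]
    simp

variable {M : Fin n → Fin n → ASMEntry}

lemma weight_emb_00 (hM : IsASMFun n M) (hXN : X ⟨n+1, by omega⟩ ≠ 0) :
    weight a X (embM M) 0 0 = sig (a ^ 2 * X (colIdx (0 : Fin (n+1))) / X ⟨n+1, by omega⟩) := by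
  have hcol : (colIdx (0 : Fin (n+1)) : Fin (2*(n+1))) = ⟨n+1, by omega⟩ := by simp [colIdx]
  rw [weight, if_pos (by simp), hcol]
  rw [mul_div_assoc, div_self hXN, mul_one]

lemma weight_emb_0succ (hM : IsASMFun n M) (j : Fin n)
    (hspec : X ⟨0, by omega⟩ = a⁻¹ * X ⟨n+1, by omega⟩) (hXN : X ⟨n+1, by omega⟩ ≠ 0) :
    weight a X (embM M) 0 j.succ
      = sig (a ^ 2 * X (colIdx j.succ) / X ⟨n+1, by omega⟩) := by
  rw [weight, if_neg (by simp), if_pos (by rw [emb_row0_psum, emb_colsucc_psum0]; omega)]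
  have hrow : (rowIdx (0 : Fin (n+1)) : Fin (2*(n+1))) = ⟨0, by omega⟩ := rfl
  rw [hrow, hspec]
  congr 1
  field_simp

lemma weight_emb_succ0 (hM : IsASMFun n M) (i : Fin n) :
    weight a X (embM M) i.succ 0 = sig (a * X ⟨n+1, by omega⟩ / X (rowIdx i.succ)) := by
  have hcol : (colIdx (0 : Fin (n+1)) : Fin (2*(n+1))) = ⟨n+1, by omega⟩ := by simp [colIdx]
  rw [weight, if_neg (by simp), if_pos (by rw [emb_rowsucc_psum0, emb_col0_psum]; omega), hcol]

lemma weight_emb_succsucc (hM : IsASMFun n M) (i j : Fin n) :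
    weight a X (embM M) i.succ j.succ
      = weight a (fun k : Fin (2*n) =>
          if k.1 < n then X ⟨k.1 + 1, by have := k.isLt; omega⟩
          else X ⟨k.1 + 2, by have := k.isLt; omega⟩) M i j := by
  have hrow : X (rowIdx i.succ)
      = (if (rowIdx i : Fin (2*n)).1 < n then X ⟨(rowIdx i : Fin (2*n)).1 + 1, by have := (rowIdx i : Fin (2*n)).isLt; omega⟩
         else X ⟨(rowIdx i : Fin (2*n)).1 + 2, by have := (rowIdx i : Fin (2*n)).isLt; omega⟩) := by
    rw [if_pos (by simpa [rowIdx] using i.isLt)]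
    congr 1
  have hcol : X (colIdx j.succ)
      = (if (colIdx j : Fin (2*n)).1 < n then X ⟨(colIdx j : Fin (2*n)).1 + 1, by have := (colIdx j : Fin (2*n)).isLt; omega⟩
         else X ⟨(colIdx j : Fin (2*n)).1 + 2, by have := (colIdx j : Fin (2*n)).isLt; omega⟩) := by
    rw [if_neg (by simp [colIdx])]
    have : (colIdx j.succ : Fin (2*(n+1))) = ⟨(colIdx j : Fin (2*n)).1 + 2, by have := (colIdx j : Fin (2*n)).isLt; omega⟩ := by
      simp [colIdx, Fin.ext_iff]; omega
    rw [this]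
  rw [weight, weight, emb_row_psum, emb_col_psum, embM_succsucc, hrow, hcol]

end Weights


section Main
variable {n : ℕ}

lemma prod_filter_ne_zero (f : Fin (n+1) → ℂ) :
    ∏ k ∈ Finset.univ.filter (fun k : Fin (n+1) => k.1 ≠ 0), f k
      = ∏ i : Fin n, f i.succ := by
  rw [Finset.prod_filter, Fin.prod_univ_succ]
  simp

lemma prod_emb (a : ℂ) (ha : a ≠ 0) (X : Fin (2*(n+1)) → ℂ)
    {M : Fin n → Fin n → ASMEntry} (hM : IsASMFun n M)
    (hspec : X ⟨0, by omega⟩ = a⁻¹ * X ⟨n+1, by omega⟩) (hXN : X ⟨n+1, by omega⟩ ≠ 0) :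
    ∏ i : Fin (n+1), ∏ j : Fin (n+1), weight a X (embM M) i j
      = (∏ i : Fin n, sig (a * X ⟨n+1, by omega⟩ / X (rowIdx i.succ)))
        * (∏ k : Fin (n+1), sig (a ^ 2 * X (colIdx k) / X ⟨n+1, by omega⟩))
        * ∏ i : Fin n, ∏ j : Fin n,
            weight a (fun k : Fin (2*n) =>
              if k.1 < n then X ⟨k.1 + 1, by have := k.isLt; omega⟩
              else X ⟨k.1 + 2, by have := k.isLt; omega⟩) M i j := by
  rw [Fin.prod_univ_succ (fun i => ∏ j, weight a X (embM M) i j)]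
  have hrow0 : ∏ j : Fin (n+1), weight a X (embM M) 0 j
      = ∏ k : Fin (n+1), sig (a ^ 2 * X (colIdx k) / X ⟨n+1, by omega⟩) := by
    rw [Fin.prod_univ_succ (fun j => weight a X (embM M) 0 j),
        Fin.prod_univ_succ (fun k => sig (a ^ 2 * X (colIdx k) / X ⟨n+1, by omega⟩))]
    rw [weight_emb_00 a X hM hXN]
    exact congrArg _ (Finset.prod_congr rfl (fun j _ => weight_emb_0succ a X hM j hspec hXN))
  have hrows : ∀ i : Fin n, ∏ j : Fin (n+1), weight a X (embM M) i.succ j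
      = sig (a * X ⟨n+1, by omega⟩ / X (rowIdx i.succ))
        * ∏ j : Fin n, weight a (fun k : Fin (2*n) =>
            if k.1 < n then X ⟨k.1 + 1, by have := k.isLt; omega⟩
            else X ⟨k.1 + 2, by have := k.isLt; omega⟩) M i j := by
    intro i
    rw [Fin.prod_univ_succ (fun j => weight a X (embM M) i.succ j),
        weight_emb_succ0 a X hM i]
    exact congrArg _ (Finset.prod_congr rfl (fun j _ => weight_emb_succsucc a X hM i j))
  rw [hrow0, Finset.prod_congr rfl (fun i _ => hrows i), Finset.prod_mul_distrib]
  ring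

lemma prod_zero_of_ne (a : ℂ) (ha : a ≠ 0) (X : Fin (2*(n+1)) → ℂ)
    {M' : Fin (n+1) → Fin (n+1) → ASMEntry} (h : IsASMFun (n+1) M')
    (h00 : (M' 0 0 : ℤ) ≠ 1)
    (hspec : X ⟨0, by omega⟩ = a⁻¹ * X ⟨n+1, by omega⟩) (hXN : X ⟨n+1, by omega⟩ ≠ 0) :
    ∏ i : Fin (n+1), ∏ j : Fin (n+1), weight a X M' i j = 0 := by
  apply Finset.prod_eq_zero (Finset.mem_univ (0 : Fin (n+1)))
  apply Finset.prod_eq_zero (Finset.mem_univ (0 : Fin (n+1)))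
  exact weight_00_of_ne a X ha h h00 hspec hXN

end Main

end ASMaux

open ASMaux in
/-- Specialization `x₁ = a⁻¹ x_{N+1}` of the partition function:
`Z(N; a⁻¹x_{N+1}, x₂,…,x_{2N}) = Π_{2≤k≤N} σ(a x_{N+1}/x_k) ·
Π_{N+1≤k≤2N} σ(a² x_k/x_{N+1}) · Z(N-1; x₂,…,x_N, x_{N+2},…,x_{2N})`. -/
theorem Z_specialization_inv_a (N : ℕ) (hN : 1 ≤ N) (a : ℂ) (ha : a ≠ 0)
    (X : Fin (2*N) → ℂ) (hX : ∀ k : Fin (2*N), k.1 ≠ 0 → X k ≠ 0)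
    (hspec : X ⟨0, by omega⟩ = a⁻¹ * X ⟨N, by omega⟩) :
    Z a N X =
      (∏ k ∈ Finset.univ.filter (fun k : Fin N => k.1 ≠ 0),
          sig (a * X ⟨N, by omega⟩ / X (rowIdx k))) *
      (∏ k : Fin N, sig (a ^ 2 * X (colIdx k) / X ⟨N, by omega⟩)) *
      Z a (N - 1) (fun k =>
        if k.1 < N - 1 then X ⟨k.1 + 1, by have := k.isLt; omega⟩
        else X ⟨k.1 + 2, by have := k.isLt; omega⟩) := by
  obtain ⟨n, rfl⟩ : ∃ n, N = n + 1 := ⟨N - 1, by omega⟩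
  have hXN : X ⟨n+1, by omega⟩ ≠ 0 := hX ⟨n+1, by omega⟩ (by simp)
  have hspec' : X ⟨0, by omega⟩ = a⁻¹ * X ⟨n+1, by omega⟩ := hspec
  have hfilter : Z a (n+1) X
      = ∑ M' ∈ Finset.univ.filter (fun M' : ASMt (n+1) => (M'.1 0 0 : ℤ) = 1),
          ∏ i, ∏ j, weight a X M'.1 i j := by
    rw [Z]
    exact (Finset.sum_filter_of_ne (fun M' _ hP => by
      by_contra h00
      exact hP (prod_zero_of_ne a ha X M'.2 h00 hspec' hXN))).symm
  have hbij : ∑ M' ∈ Finset.univ.filter (fun M' : ASMt (n+1) => (M'.1 0 0 : ℤ) = 1),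
      ∏ i, ∏ j, weight a X M'.1 i j
    = ∑ M : ASMt n,
        ((∏ i : Fin n, sig (a * X ⟨n+1, by omega⟩ / X (rowIdx i.succ)))
        * (∏ k : Fin (n+1), sig (a ^ 2 * X (colIdx k) / X ⟨n+1, by omega⟩)))
        * ∏ i : Fin n, ∏ j : Fin n,
            weight a (fun k : Fin (2*n) =>
              if k.1 < n then X ⟨k.1 + 1, by have := k.isLt; omega⟩
              else X ⟨k.1 + 2, by have := k.isLt; omega⟩) M.1 i j := by
    apply Finset.sum_bij
      (i := fun (M' : ASMt (n+1)) hM' =>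
        (⟨resM M'.1, resM_isASM M'.2 (by simpa using hM')⟩ : ASMt n))
    · intros; exact Finset.mem_univ _
    · intro M1 h1 M2 h2 heq
      apply Subtype.ext
      rw [← emb_res M1.2 (by simpa using h1), ← emb_res M2.2 (by simpa using h2)]
      exact congrArg embM (congrArg Subtype.val heq)
    · intro M _
      refine ⟨⟨embM M.1, embM_isASM M.2⟩, Finset.mem_filter.mpr ⟨Finset.mem_univ _, rfl⟩, ?_⟩
      exact Subtype.ext (res_emb M.1)
    · intro M' hM'
      have h00 : (M'.1 0 0 : ℤ) = 1 := by simpa using hM'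
      conv_lhs => rw [← emb_res M'.2 h00]
      rw [prod_emb a ha X (resM_isASM M'.2 h00) hspec' hXN]
  rw [hfilter, hbij, ← Finset.mul_sum, prod_filter_ne_zero (fun k => sig (a * X ⟨n+1, by omega⟩ / X (rowIdx k)))]
  rfl

end
end

section
/- The number of square-ice states of the N×N grid with domain-wall boundary conditions equals A(N), the number of alternating sign matrices of size N. -/
/-- A square-ice state of the `N×N` grid with domain-wall boundary conditions.
It is recorded by a pair `(h, v)` of orientation functions:
`h i j = true` iff the horizontal edge segment just to the left of column `j`
in row `i` points rightwards (`j = 0` is the left half-edge, `j = N` the right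
half-edge), and `v i j = true` iff the vertical edge segment just above row `i`
in column `j` points downwards (`i = 0` is the top half-edge, `i = N` the
bottom half-edge).  The conditions say: every vertex has exactly two incoming
edges (hence exactly two outgoing), the left and right boundary half-edges
point toward their vertex, and the top and bottom boundary half-edges point
away from their vertex. -/
def IceState (N : ℕ) : Type :=
  {hv : (Fin N → Fin (N+1) → Bool) × (Fin (N+1) → Fin N → Bool) //
    (∀ i j : Fin N,
      ((if hv.1 i j.castSucc then 1 else 0) + (if hv.1 i j.succ then 0 else 1) +
       (if hv.2 i.castSucc j then 1 else 0) + (if hv.2 i.succ j then 0 else 1) : ℕ) = 2) ∧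
    (∀ i : Fin N, hv.1 i 0 = true) ∧
    (∀ i : Fin N, hv.1 i (Fin.last N) = false) ∧
    (∀ j : Fin N, hv.2 0 j = false) ∧
    (∀ j : Fin N, hv.2 (Fin.last N) j = true)}

namespace IceASM

open Finset

/-- Predecessor set: indices whose `castSucc` is below `t`. -/
def PF {N : ℕ} (t : Fin (N+1)) : Finset (Fin N) :=
  Finset.univ.filter fun k => k.castSucc < t

lemma PF_zero {N : ℕ} : PF (0 : Fin (N+1)) = ∅ := by
  ext k; simp [PF, Fin.lt_def]

lemma PF_succ {N : ℕ} (i : Fin N) :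
    PF i.succ = insert i (PF i.castSucc) := by
  ext k
  simp only [PF, Finset.mem_insert, Finset.mem_filter, Finset.mem_univ, true_and,
    Fin.lt_def, Fin.coe_castSucc, Fin.val_succ]
  constructor
  · intro h
    rcases eq_or_lt_of_le (Nat.lt_succ_iff.mp h) with h | h
    · left; exact Fin.ext h
    · right; exact h
  · rintro (rfl | h) <;> omega

lemma not_mem_PF {N : ℕ} (i : Fin N) : i ∉ PF i.castSucc := by
  simp [PF]

lemma PF_Iic {N : ℕ} (j : Fin N) : PF j.succ = Finset.Iic j := by
  ext k
  simp only [PF, Finset.mem_filter, Finset.mem_univ, true_and, Finset.mem_Iic,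
    Fin.lt_def, Fin.le_def, Fin.coe_castSucc, Fin.val_succ]
  omega

lemma PF_last {N : ℕ} : PF (Fin.last N) = Finset.univ := by
  ext k
  simp only [PF, Finset.mem_filter, Finset.mem_univ, true_and, Finset.mem_univ, iff_true]
  exact Fin.castSucc_lt_last k

lemma tele {N : ℕ} (F : Fin (N+1) → ℤ) (t : Fin (N+1)) :
    ∑ k ∈ PF t, (F k.succ - F k.castSucc) = F t - F 0 := by
  induction t using Fin.induction with
  | zero => simp [PF_zero]
  | succ i ih => rw [PF_succ, Finset.sum_insert (not_mem_PF i), ih]; ring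

end IceASM
namespace IceASM

/-- Matrix entry from an ice state. -/
def toM {N : ℕ} (hv : (Fin N → Fin (N+1) → Bool) × (Fin (N+1) → Fin N → Bool))
    (i j : Fin N) : ℤ :=
  (if hv.1 i j.castSucc then 1 else 0) - (if hv.1 i j.succ then 1 else 0)

lemma toM_vert {N : ℕ} (hv : (Fin N → Fin (N+1) → Bool) × (Fin (N+1) → Fin N → Bool))
    (hP : ∀ i j : Fin N,
      ((if hv.1 i j.castSucc then 1 else 0) + (if hv.1 i j.succ then 0 else 1) +
       (if hv.2 i.castSucc j then 1 else 0) + (if hv.2 i.succ j then 0 else 1) : ℕ) = 2)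
    (i j : Fin N) :
    toM hv i j = (if hv.2 i.succ j then 1 else 0) - (if hv.2 i.castSucc j then 1 else 0) := by
  have := hP i j
  unfold toM
  revert this
  cases hv.1 i j.castSucc <;> cases hv.1 i j.succ <;>
    cases hv.2 i.castSucc j <;> cases hv.2 i.succ j <;> simp

lemma toM_row_sum {N : ℕ} (hv : (Fin N → Fin (N+1) → Bool) × (Fin (N+1) → Fin N → Bool))
    (i : Fin N) (t : Fin (N+1)) :
    ∑ k ∈ PF t, toM hv i k
      = (if hv.1 i 0 then 1 else 0) - (if hv.1 i t then 1 else 0) := by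
  have := tele (fun t => -(if hv.1 i t then (1:ℤ) else 0)) t
  rw [show ((if hv.1 i 0 then (1:ℤ) else 0) - if hv.1 i t then 1 else 0)
      = (-if hv.1 i t then (1:ℤ) else 0) - -if hv.1 i 0 then 1 else 0 by ring, ← this]
  apply Finset.sum_congr rfl
  intro k _
  unfold toM
  ring

lemma toM_col_sum {N : ℕ} (hv : (Fin N → Fin (N+1) → Bool) × (Fin (N+1) → Fin N → Bool))
    (hP : ∀ i j : Fin N,
      ((if hv.1 i j.castSucc then 1 else 0) + (if hv.1 i j.succ then 0 else 1) +
       (if hv.2 i.castSucc j then 1 else 0) + (if hv.2 i.succ j then 0 else 1) : ℕ) = 2)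
    (j : Fin N) (t : Fin (N+1)) :
    ∑ k ∈ PF t, toM hv k j
      = (if hv.2 t j then 1 else 0) - (if hv.2 0 j then 1 else 0) := by
  have := tele (fun t => (if hv.2 t j then (1:ℤ) else 0)) t
  rw [← this]
  exact Finset.sum_congr rfl fun k _ => toM_vert hv hP k j

end IceASM
namespace IceASM

lemma toM_isASM {N : ℕ} (x : IceState N) : IsASM N (fun i j => toM x.1 i j) := by
  obtain ⟨hv, hP, hL0, hLN, hT0, hTN⟩ := x
  refine ⟨?_, ?_, ?_, ?_, ?_⟩
  · intro i j
    unfold toM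
    rcases hb1 : hv.1 i j.castSucc <;> rcases hb2 : hv.1 i j.succ <;>
      simp [hb1, hb2]
  · intro i j
    rw [← PF_Iic, toM_row_sum, hL0 i]
    cases hv.1 i j.succ <;> simp
  · intro i j
    rw [← PF_Iic, toM_col_sum hv hP, hT0 j]
    cases hv.2 i.succ j <;> simp
  · intro i
    rw [← PF_last, toM_row_sum, hL0 i, hLN i]
    simp
  · intro j
    rw [← PF_last, toM_col_sum hv hP, hT0 j, hTN j]
    simp

/-- Ice state from an ASM. -/
def ofM {N : ℕ} (M : Matrix (Fin N) (Fin N) ℤ) :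
    (Fin N → Fin (N+1) → Bool) × (Fin (N+1) → Fin N → Bool) :=
  (fun i t => decide (∑ k ∈ PF t, M i k = 0),
   fun t j => decide (∑ k ∈ PF t, M k j = 1))

lemma ofM_isIce {N : ℕ} (M : Matrix (Fin N) (Fin N) ℤ) (hM : IsASM N M) :
    (∀ i j : Fin N,
      ((if (ofM M).1 i j.castSucc then 1 else 0) + (if (ofM M).1 i j.succ then 0 else 1) +
       (if (ofM M).2 i.castSucc j then 1 else 0) + (if (ofM M).2 i.succ j then 0 else 1) : ℕ) = 2) ∧
    (∀ i : Fin N, (ofM M).1 i 0 = true) ∧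
    (∀ i : Fin N, (ofM M).1 i (Fin.last N) = false) ∧
    (∀ j : Fin N, (ofM M).2 0 j = false) ∧
    (∀ j : Fin N, (ofM M).2 (Fin.last N) j = true) := by
  obtain ⟨h01, hrow, hcol, hrsum, hcsum⟩ := hM
  have rowps : ∀ (i : Fin N) (t : Fin (N+1)),
      (∑ k ∈ PF t, M i k) = 0 ∨ (∑ k ∈ PF t, M i k) = 1 := by
    intro i t
    induction t using Fin.cases with
    | zero => left; simp [PF_zero]
    | succ j => rw [PF_Iic]; exact hrow i j
  have colps : ∀ (j : Fin N) (t : Fin (N+1)),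
      (∑ k ∈ PF t, M k j) = 0 ∨ (∑ k ∈ PF t, M k j) = 1 := by
    intro j t
    induction t using Fin.cases with
    | zero => left; simp [PF_zero]
    | succ i => rw [PF_Iic]; exact hcol i j
  refine ⟨?_, ?_, ?_, ?_, ?_⟩
  · intro i j
    have hs : (∑ k ∈ PF j.succ, M i k) = (∑ k ∈ PF j.castSucc, M i k) + M i j := by
      rw [PF_succ, Finset.sum_insert (not_mem_PF j)]; ring
    have hc : (∑ k ∈ PF i.succ, M k j) = (∑ k ∈ PF i.castSucc, M k j) + M i j := by
      rw [PF_succ, Finset.sum_insert (not_mem_PF i)]; ring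
    have key : (∑ k ∈ PF j.succ, M i k) - (∑ k ∈ PF j.castSucc, M i k)
        = (∑ k ∈ PF i.succ, M k j) - (∑ k ∈ PF i.castSucc, M k j) := by
      rw [hs, hc]; ring
    simp only [ofM]
    rcases rowps i j.castSucc with h1 | h1 <;> rcases rowps i j.succ with h2 | h2 <;>
      rcases colps j i.castSucc with h3 | h3 <;> rcases colps j i.succ with h4 | h4 <;>
      simp only [h1, h2, h3, h4] at key ⊢ <;>
      first
        | (exfalso; omega)
        | norm_num
  · intro i; simp [ofM, PF_zero]
  · intro i; simp [ofM, PF_last, hrsum i]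
  · intro j; simp [ofM, PF_zero]
  · intro j; simp [ofM, PF_last, hcsum j]

end IceASM
namespace IceASM

lemma ofM_toM {N : ℕ} (x : IceState N) : ofM (fun i j => toM x.1 i j) = x.1 := by
  obtain ⟨hv, hP, hL0, hLN, hT0, hTN⟩ := x
  unfold ofM
  refine Prod.ext ?_ ?_
  · funext i t
    simp only
    rw [toM_row_sum, hL0 i]
    rcases hb : hv.1 i t <;> simp [hb]
  · funext t j
    simp only
    rw [toM_col_sum hv hP, hT0 j]
    rcases hb : hv.2 t j <;> simp [hb]

lemma toM_ofM {N : ℕ} (M : Matrix (Fin N) (Fin N) ℤ) (hM : IsASM N M) :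
    (fun i j => toM (ofM M) i j) = M := by
  obtain ⟨h01, hrow, hcol, hrsum, hcsum⟩ := hM
  funext i j
  have rowps : ∀ (t : Fin (N+1)),
      (∑ k ∈ PF t, M i k) = 0 ∨ (∑ k ∈ PF t, M i k) = 1 := by
    intro t
    induction t using Fin.cases with
    | zero => left; simp [PF_zero]
    | succ j => rw [PF_Iic]; exact hrow i j
  have hs : (∑ k ∈ PF j.succ, M i k) = (∑ k ∈ PF j.castSucc, M i k) + M i j := by
    rw [PF_succ, Finset.sum_insert (not_mem_PF j)]; ring
  simp only [toM, ofM]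
  rcases rowps j.castSucc with h1 | h1 <;> rcases rowps j.succ with h2 | h2 <;>
    simp only [h1, h2] <;> norm_num <;> omega

end IceASM
/-- The explicit bijection between square-ice states and ASMs. -/
noncomputable def IceASM.equiv (N : ℕ) :
    IceState N ≃ {M : Matrix (Fin N) (Fin N) ℤ // IsASM N M} where
  toFun x := ⟨fun i j => IceASM.toM x.1 i j, IceASM.toM_isASM x⟩
  invFun M := ⟨IceASM.ofM M.1, IceASM.ofM_isIce M.1 M.2⟩
  left_inv x := Subtype.ext (IceASM.ofM_toM x)
  right_inv M := Subtype.ext (IceASM.toM_ofM M.1 M.2)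

/-- The number of square-ice states of the `N×N` grid with domain-wall boundary
conditions equals `A(N)`, the number of ASMs of size `N`. -/
theorem ice_states_eq_ASM_count (N : ℕ) :
    Nat.card (IceState N) = Nat.card {M : Matrix (Fin N) (Fin N) ℤ // IsASM N M} :=
  Nat.card_congr (IceASM.equiv N)
end

section
/- For every integer N ≥ 1, every nonzero complex number a and all fixed nonzero complex x₂,…,x_{2N}, the function x ↦ Z(N; x, x₂,…,x_{2N}) is a centered Laurent polynomial in x of half-width at most N−1 and of fixed parity: there exist complex coefficients c_k, for integers k with |k| ≤ N−1 and k ≡ N−1 (mod 2), such that Z(N; x, x₂,…,x_{2N}) = Σ_k c_k x^k for all nonzero x. -/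
noncomputable section

def Good (d : ℕ) (f : ℂ → ℂ) : Prop :=
  ∃ P : Polynomial ℂ, (∀ n, P.coeff n ≠ 0 → n ≤ 2 * d ∧ 2 ∣ n) ∧
    ∀ x : ℂ, x ≠ 0 → f x = P.eval x / x ^ d

lemma good_congr {d : ℕ} {f g : ℂ → ℂ} (h : Good d f)
    (hfg : ∀ x : ℂ, x ≠ 0 → f x = g x) : Good d g := by
  obtain ⟨P, h1, h2⟩ := h
  refine ⟨P, h1, fun x hx => ?_⟩
  rw [← hfg x hx]; exact h2 x hx

lemma good_const (t : ℂ) : Good 0 (fun _ => t) := by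
  refine ⟨Polynomial.C t, fun n hn => ?_, fun x hx => by simp⟩
  rw [Polynomial.coeff_C] at hn
  by_cases h : n = 0 <;> simp [h] at hn ⊢

lemma good_zero (d : ℕ) : Good d (fun _ => 0) :=
  ⟨0, by simp, fun x hx => by simp⟩

lemma good_lin (α β : ℂ) : Good 1 (fun x => α * x + β * x⁻¹) := by
  refine ⟨Polynomial.C β + Polynomial.C α * Polynomial.X ^ 2, fun n hn => ?_, fun x hx => ?_⟩
  · rw [Polynomial.coeff_add, Polynomial.coeff_C, Polynomial.coeff_C_mul,
      Polynomial.coeff_X_pow] at hn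
    by_cases h0 : n = 0
    · omega
    · rcases eq_or_ne n 2 with h2 | h2
      · omega
      · simp [h0, h2] at hn
  · simp only [Polynomial.eval_add, Polynomial.eval_C, Polynomial.eval_mul,
      Polynomial.eval_pow, Polynomial.eval_X]
    field_simp
    ring

lemma good_add {d : ℕ} {f g : ℂ → ℂ} (hf : Good d f) (hg : Good d g) :
    Good d (fun x => f x + g x) := by
  obtain ⟨P, hP, hPe⟩ := hf
  obtain ⟨Q, hQ, hQe⟩ := hg
  refine ⟨P + Q, fun n hn => ?_, fun x hx => ?_⟩
  · rw [Polynomial.coeff_add] at hn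
    by_cases h : P.coeff n ≠ 0
    · exact hP n h
    · push_neg at h
      exact hQ n (by intro h'; rw [h, h'] at hn; simp at hn)
  · show f x + g x = _
    rw [hPe x hx, hQe x hx, Polynomial.eval_add, ← add_div]

lemma good_mul {d₁ d₂ : ℕ} {f g : ℂ → ℂ} (hf : Good d₁ f) (hg : Good d₂ g) :
    Good (d₁ + d₂) (fun x => f x * g x) := by
  obtain ⟨P, hP, hPe⟩ := hf
  obtain ⟨Q, hQ, hQe⟩ := hg
  refine ⟨P * Q, fun n hn => ?_, fun x hx => ?_⟩
  · rw [Polynomial.coeff_mul] at hn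
    obtain ⟨⟨i, j⟩, hij, hne⟩ := Finset.exists_ne_zero_of_sum_ne_zero hn
    rw [Finset.HasAntidiagonal.mem_antidiagonal] at hij
    have hi := hP i (left_ne_zero_of_mul hne)
    have hj := hQ j (right_ne_zero_of_mul hne)
    omega
  · show f x * g x = _
    rw [hPe x hx, hQe x hx, Polynomial.eval_mul, pow_add, div_mul_div_comm]

lemma good_prod {ι : Type*} (s : Finset ι) (d : ι → ℕ) (f : ι → ℂ → ℂ)
    (h : ∀ j ∈ s, Good (d j) (f j)) :
    Good (∑ j ∈ s, d j) (fun x => ∏ j ∈ s, f j x) := by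
  classical
  induction s using Finset.induction_on with
  | empty => simpa using good_const 1
  | insert b s hj ih =>
      rw [Finset.sum_insert hj]
      have h1 := good_mul (h b (Finset.mem_insert_self b s))
        (ih (fun j hjs => h j (Finset.mem_insert_of_mem hjs)))
      exact good_congr h1 (fun x hx => by rw [Finset.prod_insert hj])

lemma good_sum {ι : Type*} (s : Finset ι) (d : ℕ) (f : ι → ℂ → ℂ)
    (h : ∀ j ∈ s, Good d (f j)) :
    Good d (fun x => ∑ j ∈ s, f j x) := by
  classical
  induction s using Finset.induction_on with
  | empty => simpa using good_zero d
  | insert b s hj ih =>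
      have h1 := good_add (h b (Finset.mem_insert_self b s))
        (ih (fun j hjs => h j (Finset.mem_insert_of_mem hjs)))
      exact good_congr h1 (fun x hx => by rw [Finset.sum_insert hj])

/-- As a function of `x = x₁`, the partition function `Z(N; x, x₂,…,x_{2N})` is
a centered Laurent polynomial of half-width at most `N-1` and of the parity of
`N-1`: `Z = Σ_k c_k x^k`, where `c_k = 0` unless `|k| ≤ N-1` and
`k ≡ N-1 (mod 2)`. -/
theorem Z_Laurent_in_first_var (N : ℕ) (hN : 1 ≤ N) (a : ℂ) (ha : a ≠ 0)
    (X : Fin (2*N) → ℂ) (hX : ∀ k : Fin (2*N), k.1 ≠ 0 → X k ≠ 0) :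
    ∃ c : ℤ → ℂ,
      (∀ k : ℤ, c k ≠ 0 → |k| ≤ (N : ℤ) - 1 ∧ (2 : ℤ) ∣ (k - ((N : ℤ) - 1))) ∧
      ∀ x : ℂ, x ≠ 0 →
        Z a N (fun m => if m.1 = 0 then x else X m) =
          ∑ k ∈ Finset.Icc (1 - (N : ℤ)) ((N : ℤ) - 1), c k * x ^ k := by
  classical
  haveI : NeZero N := ⟨by omega⟩
  set d : ℕ := N - 1 with hd
  have hdz : (d : ℤ) = (N : ℤ) - 1 := by omega
  set Xf : ℂ → Fin (2*N) → ℂ := fun x m => if m.1 = 0 then x else X m with hXf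
  -- Step 1 : the function is Good d
  have key : Good d (fun x => Z a N (Xf x)) := by
    apply good_congr (good_sum Finset.univ d
      (fun (M : ASMt N) x => ∏ i : Fin N, ∏ j : Fin N, weight a (Xf x) M.1 i j) ?_)
    · intro x hx
      rfl
    · intro M _
      -- row 0 entries are 0 or 1
      have hIic0 : Finset.Iic (0 : Fin N) = {0} := by
        ext k; simp [Fin.le_zero_iff]
      have h01 : ∀ j : Fin N, (M.1 0 j : ℤ) = 0 ∨ (M.1 0 j : ℤ) = 1 := by
        intro j
        have := M.2.2.1 0 j
        rwa [hIic0, Finset.sum_singleton] at this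
      -- cardinality of zero entries in row 0
      have hcard : (Finset.univ.filter (fun j : Fin N => (M.1 0 j : ℤ) = 0)).card = N - 1 := by
        have hsum : (∑ j, (M.1 0 j : ℤ)) = 1 := M.2.2.2.1 0
        rw [← Finset.sum_filter_add_sum_filter_not Finset.univ
          (fun j : Fin N => (M.1 0 j : ℤ) = 0)] at hsum
        have e1 : (∑ j ∈ Finset.univ.filter (fun j : Fin N => (M.1 0 j : ℤ) = 0),
            (M.1 0 j : ℤ)) = 0 := Finset.sum_eq_zero (fun j hj => by
          simpa using (Finset.mem_filter.mp hj).2)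
        have e2 : (∑ j ∈ Finset.univ.filter (fun j : Fin N => ¬ (M.1 0 j : ℤ) = 0),
            (M.1 0 j : ℤ)) =
            (Finset.univ.filter (fun j : Fin N => ¬ (M.1 0 j : ℤ) = 0)).card := by
          rw [Finset.sum_congr rfl (fun j hj => ?_), Finset.sum_const, nsmul_eq_mul, mul_one]
          have := (Finset.mem_filter.mp hj).2
          rcases h01 j with h | h
          · exact absurd h this
          · exact h
        rw [e1, e2, zero_add] at hsum
        have hc2 : (Finset.univ.filter (fun j : Fin N => ¬ (M.1 0 j : ℤ) = 0)).card = 1 := by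
          exact_mod_cast hsum
        have := Finset.card_filter_add_card_filter_not
          (s := (Finset.univ : Finset (Fin N))) (p := fun j : Fin N => (M.1 0 j : ℤ) = 0)
        simp only [Finset.card_univ, Fintype.card_fin] at this
        omega
      -- per-row goodness
      have hrow : ∀ i : Fin N,
          Good (if i = 0 then d else 0) (fun x => ∏ j : Fin N, weight a (Xf x) M.1 i j) := by
        intro i
        by_cases hi : i = 0
        · subst hi
          simp only [if_pos rfl]
          have hcols : ∀ j : Fin N,
              Good (if (M.1 0 j : ℤ) = 0 then 1 else 0)
                (fun x => weight a (Xf x) M.1 0 j) := by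
            intro j
            have hy : X (colIdx j) ≠ 0 := hX (colIdx j) (by simp [colIdx]; omega)
            have hXc : ∀ x : ℂ, Xf x (colIdx j) = X (colIdx j) := by
              intro x; simp only [hXf]
              exact if_neg (fun h => by simp [colIdx] at h; omega)
            have hXr : ∀ x : ℂ, Xf x (rowIdx (0 : Fin N)) = x := by
              intro x; simp only [hXf]
              exact if_pos (by simp [rowIdx])
            by_cases h0 : (M.1 0 j : ℤ) = 0
            · rw [if_pos h0]
              by_cases hC : (∑ k ∈ Finset.Iic j, (M.1 0 k : ℤ)) ≠
                  (∑ k ∈ Finset.Iic (0 : Fin N), (M.1 k j : ℤ))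
              · apply good_congr (good_lin (-(a * X (colIdx j))⁻¹) (a * X (colIdx j)))
                intro x hx
                simp only [weight, hXc, hXr]
                rw [if_neg (not_not.mpr h0), if_pos hC]
                simp only [sig]
                field_simp
                ring
              · apply good_congr (good_lin (a / X (colIdx j)) (-(X (colIdx j) / a)))
                intro x hx
                simp only [weight, hXc, hXr]
                rw [if_neg (not_not.mpr h0), if_neg hC]
                simp only [sig]
                field_simp
                ring
            · rw [if_neg h0]
              apply good_congr (good_const (sig (a ^ 2)))
              intro x hx
              rw [weight, if_pos h0]
          have h := good_prod Finset.univ _ _ (fun j _ => hcols j)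
          have hdeg : (∑ j : Fin N, (if (M.1 0 j : ℤ) = 0 then 1 else 0)) = d := by
            rw [Finset.sum_ite, Finset.sum_const, Finset.sum_const, smul_eq_mul,
              smul_eq_mul, mul_one, mul_zero, add_zero, hcard]
          rwa [hdeg] at h
        · simp only [if_neg hi]
          apply good_congr (good_const (∏ j : Fin N, weight a (Xf 1) M.1 i j))
          intro x hx
          apply Finset.prod_congr rfl
          intro j _
          have hine : ¬ ((rowIdx i).1 = 0) := fun h => hi (Fin.ext h)
          have hcne : ¬ ((colIdx (N := N) j).1 = 0) := fun h => by
            simp [colIdx] at h; omega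
          have h1 : ∀ y : ℂ, Xf y (rowIdx i) = X (rowIdx i) := by
            intro y; simp only [hXf]; exact if_neg hine
          have h2 : ∀ y : ℂ, Xf y (colIdx j) = X (colIdx j) := by
            intro y; simp only [hXf]; exact if_neg hcne
          simp only [weight, h1, h2]
      have h := good_prod Finset.univ (fun i : Fin N => if i = 0 then d else 0)
        (fun i x => ∏ j : Fin N, weight a (Xf x) M.1 i j) (fun i _ => hrow i)
      have hdeg : (∑ i : Fin N, (if i = 0 then d else 0)) = d := by
        simp
      rwa [hdeg] at h
  -- Step 2 : extract the coefficients
  obtain ⟨P, hP, hPe⟩ := key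
  refine ⟨fun k => if 0 ≤ k + d then P.coeff (k + d).toNat else 0, fun k hk => ?_, fun x hx => ?_⟩
  · have hk' : (if 0 ≤ k + (d : ℤ) then P.coeff (k + d).toNat else 0) ≠ 0 := hk
    by_cases hkd : 0 ≤ k + (d : ℤ)
    · rw [if_pos hkd] at hk'
      have hco := hP (k + d).toNat hk'
      have h1 : ((k + d).toNat : ℤ) = k + d := Int.toNat_of_nonneg hkd
      have h2 : ((k + d).toNat : ℤ) ≤ 2 * d := by exact_mod_cast hco.1
      have h3 : (2 : ℤ) ∣ ((k + d).toNat : ℤ) := by exact_mod_cast hco.2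
      rw [abs_le]
      omega
    · rw [if_neg hkd] at hk'
      exact absurd rfl hk'
  · have hgoal : Z a N (fun m => if m.1 = 0 then x else X m) = Polynomial.eval x P / x ^ d :=
      hPe x hx
    rw [hgoal]
    have hndeg : P.natDegree ≤ 2 * d := by
      rw [Polynomial.natDegree_le_iff_coeff_eq_zero]
      intro m hm
      by_contra h
      have := (hP m h).1
      omega
    have hdegP : P.natDegree < 2 * d + 1 := by omega
    rw [Polynomial.eval_eq_sum_range' hdegP, Finset.sum_div]
    symm
    apply Finset.sum_nbij' (i := fun k : ℤ => (k + d).toNat) (j := fun n : ℕ => (n : ℤ) - d)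
    · intro k hk
      rw [Finset.mem_Icc] at hk
      rw [Finset.mem_range]
      omega
    · intro n hn
      rw [Finset.mem_range] at hn
      rw [Finset.mem_Icc]
      omega
    · intro k hk
      rw [Finset.mem_Icc] at hk
      omega
    · intro n hn
      rw [Finset.mem_range] at hn
      omega
    · intro k hk
      rw [Finset.mem_Icc] at hk
      have hif : (fun k : ℤ => if 0 ≤ k + (d : ℤ) then P.coeff (k + d).toNat else 0) k
          = P.coeff (k + (d : ℤ)).toNat := if_pos (by omega)
      rw [hif]
      have h1 : ((k + d).toNat : ℤ) = k + d := Int.toNat_of_nonneg (by omega)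
      have h2 : x ^ k = x ^ ((k + d).toNat) / x ^ d := by
        rw [eq_div_iff (pow_ne_zero d hx), ← zpow_natCast x ((k + d).toNat),
          ← zpow_natCast x d, ← zpow_add₀ hx, h1]
      rw [h2, mul_div_assoc]

end
end
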